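/- For all n ≥ 0, iterating the multiplicative operator gives ((log(1+λ)/λ)·x + 2y·∂_x)ⁿ applied to the constant function 1 equals H_n(x,y|λ). -/

import Mathlib

open Real Finset MeasureTheory

noncomputable def dH (l x y : ℝ) (n : ℕ) : ℝ :=
  ∑ k ∈ Finset.range (n / 2 + 1),
    (Nat.factorial n : ℝ) / ((Nat.factorial (n - 2 * k) : ℝ) * (Nat.factorial k : ℝ)) *
      (Real.log (1 + l) / l) ^ (n - k) * x ^ (n - 2 * k) * y ^ k

noncomputable def aco (n k : ℕ) : ℝ :=
  (n.choose (2 * k) : ℝ) * (Nat.factorial (2 * k) : ℝ) / (Nat.factorial k : ℝ)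

noncomputable def E (c y : ℝ) (n : ℕ) (x : ℝ) : ℝ :=
  ∑ k ∈ Finset.range (n + 1), aco n k * c ^ (n - k) * x ^ (n - 2 * k) * y ^ k

lemma aco_zero (n : ℕ) : aco n 0 = 1 := by simp [aco]

lemma aco_eq_zero {n k : ℕ} (h : n < 2 * k) : aco n k = 0 := by
  simp [aco, Nat.choose_eq_zero_of_lt h]

lemma aco_step (n j : ℕ) :
    aco (n + 1) (j + 1) = aco n (j + 1) + 2 * ((n - 2 * j : ℕ) : ℝ) * aco n j := by
  have pas : (n + 1).choose (2 * (j + 1)) = n.choose (2 * j + 1) + n.choose (2 * (j + 1)) := by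
    have : 2 * (j + 1) = (2 * j + 1) + 1 := by ring
    rw [this, Nat.choose_succ_succ']
  have hr : n.choose (2 * j + 1) * (2 * j + 1) = n.choose (2 * j) * (n - 2 * j) :=
    Nat.choose_succ_right_eq n (2 * j)
  have hrR : (n.choose (2 * j + 1) : ℝ) * (2 * (j:ℝ) + 1)
      = (n.choose (2 * j) : ℝ) * ((n - 2 * j : ℕ) : ℝ) := by
    exact_mod_cast congrArg (Nat.cast : ℕ → ℝ) hr
  have hfac2 : (Nat.factorial (2 * (j + 1)) : ℝ)
      = (2 * (j:ℝ) + 2) * (2 * (j:ℝ) + 1) * (Nat.factorial (2 * j)) := by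
    have : 2 * (j + 1) = (2 * j + 1) + 1 := by ring
    rw [this, Nat.factorial_succ, Nat.factorial_succ]
    push_cast; ring
  have hfac1 : (Nat.factorial (j + 1) : ℝ) = ((j:ℝ) + 1) * (Nat.factorial j) := by
    rw [Nat.factorial_succ]; push_cast; ring
  have h1 : (Nat.factorial j : ℝ) ≠ 0 := Nat.cast_ne_zero.mpr (Nat.factorial_ne_zero j)
  have h3 : ((j : ℝ) + 1) ≠ 0 := by positivity
  simp only [aco, pas, Nat.cast_add, hfac2, hfac1]
  field_simp
  linear_combination hrR

lemma dH_eq (l x y : ℝ) (n : ℕ) : dH l x y n = E (Real.log (1 + l) / l) y n x := by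
  unfold dH E
  rw [← Finset.sum_subset (Finset.range_subset_range.mpr (by omega : n / 2 + 1 ≤ n + 1))
      (fun k hk hk' => by
        have h : n < 2 * k := by simp at hk hk'; omega
        simp [aco_eq_zero h])]
  refine Finset.sum_congr rfl fun k hk => ?_
  have hk2 : 2 * k ≤ n := by
    have := Finset.mem_range.mp hk; omega
  have hR : ((n.choose (2 * k) : ℝ)) * (Nat.factorial (2 * k)) * (Nat.factorial (n - 2 * k))
      = (Nat.factorial n : ℝ) := by
    exact_mod_cast congrArg (Nat.cast : ℕ → ℝ)
      (Nat.choose_mul_factorial_mul_factorial hk2)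
  have h1 : (Nat.factorial (n - 2 * k) : ℝ) ≠ 0 := Nat.cast_ne_zero.mpr (Nat.factorial_ne_zero _)
  have h2 : (Nat.factorial k : ℝ) ≠ 0 := Nat.cast_ne_zero.mpr (Nat.factorial_ne_zero _)
  have hco : (Nat.factorial n : ℝ) / ((Nat.factorial (n - 2 * k) : ℝ) * (Nat.factorial k : ℝ))
      = aco n k := by
    rw [aco, ← hR]; field_simp
  rw [hco]

lemma E_hasDeriv (c y : ℝ) (n : ℕ) (x : ℝ) :
    HasDerivAt (E c y n)
      (∑ k ∈ Finset.range (n + 1),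
        aco n k * c ^ (n - k) * (((n - 2 * k : ℕ) : ℝ) * x ^ (n - 2 * k - 1)) * y ^ k) x := by
  apply HasDerivAt.fun_sum
  intro k _
  exact ((hasDerivAt_pow (n - 2 * k) x).const_mul (aco n k * c ^ (n - k))).mul_const (y ^ k)

lemma E_rec (c y : ℝ) (n : ℕ) (x : ℝ) :
    E c y (n + 1) x = c * x * E c y n x
      + 2 * y * ∑ k ∈ Finset.range (n + 1),
          aco n k * c ^ (n - k) * (((n - 2 * k : ℕ) : ℝ) * x ^ (n - 2 * k - 1)) * y ^ k := by
  unfold E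
  rw [Finset.sum_range_succ'
      (fun k => aco (n + 1) k * c ^ (n + 1 - k) * x ^ (n + 1 - 2 * k) * y ^ k) (n + 1)]
  rw [Finset.mul_sum, Finset.mul_sum,
    Finset.sum_range_succ'
      (fun k => c * x * (aco n k * c ^ (n - k) * x ^ (n - 2 * k) * y ^ k)) n]
  have hsplit : ∀ j ∈ Finset.range (n + 1),
      aco (n + 1) (j + 1) * c ^ (n + 1 - (j + 1)) * x ^ (n + 1 - 2 * (j + 1)) * y ^ (j + 1)
      = aco n (j + 1) * c ^ (n - j) * x ^ (n + 1 - 2 * (j + 1)) * y ^ (j + 1)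
        + 2 * ((n - 2 * j : ℕ) : ℝ) * aco n j * c ^ (n - j) * x ^ (n + 1 - 2 * (j + 1)) * y ^ (j + 1) := by
    intro j _
    have h1 : n + 1 - (j + 1) = n - j := by omega
    rw [h1, aco_step]; ring
  rw [Finset.sum_congr rfl hsplit, Finset.sum_add_distrib]
  have hA : ∑ j ∈ Finset.range (n + 1),
      aco n (j + 1) * c ^ (n - j) * x ^ (n + 1 - 2 * (j + 1)) * y ^ (j + 1)
      = ∑ j ∈ Finset.range n,
          c * x * (aco n (j + 1) * c ^ (n - (j + 1)) * x ^ (n - 2 * (j + 1)) * y ^ (j + 1)) := by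
    rw [Finset.sum_range_succ, aco_eq_zero (by omega : n < 2 * (n + 1))]
    rw [zero_mul, zero_mul, zero_mul, add_zero]
    refine Finset.sum_congr rfl fun j hj => ?_
    have hj' : j < n := Finset.mem_range.mp hj
    by_cases h : n < 2 * (j + 1)
    · rw [aco_eq_zero h]; ring
    · have e1 : n - j = (n - (j + 1)) + 1 := by omega
      have e2 : n + 1 - 2 * (j + 1) = (n - 2 * (j + 1)) + 1 := by omega
      rw [e1, e2, pow_succ, pow_succ]; ring
  have hB : ∑ j ∈ Finset.range (n + 1),
      2 * ((n - 2 * j : ℕ) : ℝ) * aco n j * c ^ (n - j) * x ^ (n + 1 - 2 * (j + 1)) * y ^ (j + 1)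
      = ∑ k ∈ Finset.range (n + 1),
          2 * y * (aco n k * c ^ (n - k) * (((n - 2 * k : ℕ) : ℝ) * x ^ (n - 2 * k - 1)) * y ^ k) := by
    refine Finset.sum_congr rfl fun j _ => ?_
    have e : n + 1 - 2 * (j + 1) = n - 2 * j - 1 := by omega
    rw [e, pow_succ]; ring
  rw [hA, hB]
  simp only [aco_zero, Nat.sub_zero, Nat.mul_zero, pow_zero, pow_succ]
  ring

lemma iter_eq (c y : ℝ) (n : ℕ) :
    ((fun f : ℝ → ℝ => fun x' => c * x' * f x' + 2 * y * deriv f x')^[n]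
      (fun _ => (1 : ℝ))) = fun x => E c y n x := by
  induction n with
  | zero =>
    funext x
    simp [E, aco]
  | succ n ih =>
    rw [Function.iterate_succ_apply', ih]
    funext x
    have hd : deriv (fun x => E c y n x) x
        = ∑ k ∈ Finset.range (n + 1),
            aco n k * c ^ (n - k) * (((n - 2 * k : ℕ) : ℝ) * x ^ (n - 2 * k - 1)) * y ^ k :=
      (E_hasDeriv c y n x).deriv
    simp only [hd]
    rw [E_rec]

theorem stmt16 (l y : ℝ) (hl : 0 < l) (n : ℕ) (x : ℝ) :
    ((fun f : ℝ → ℝ => fun x' =>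
        (Real.log (1 + l) / l) * x' * f x' + 2 * y * deriv f x')^[n]
      (fun _ => (1 : ℝ))) x = dH l x y n := by
  rw [iter_eq, dH_eq]
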